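/- For a commutative ring R, the following are equivalent: (1) every unimodular 2×2 matrix over R of determinant 0 is extendable; (2) every unimodular 2×2 matrix over R of determinant 0 is non-full; (3) for every unimodular 2×2 matrix A over R of determinant 0, the kernel of the R-linear map R² → R² given by A is isomorphic to R as an R-module. -/

import Mathlib

open Matrix

/-- A `2 × 2` matrix is unimodular if its four entries generate the unit ideal. -/
def Unimodular2 {R : Type*} [CommRing R] (A : Matrix (Fin 2) (Fin 2) R) : Prop :=
  Ideal.span {A 0 0, A 0 1, A 1 0, A 1 1} = ⊤

/-- A `2 × 2` matrix is extendable if it is the top-left block of a `3 × 3` matrix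
of determinant `1`. -/
def Extendable {R : Type*} [CommRing R] (A : Matrix (Fin 2) (Fin 2) R) : Prop :=
  ∃ B : Matrix (Fin 3) (Fin 3) R, B.det = 1 ∧
    ∀ i j : Fin 2, B i.castSucc j.castSucc = A i j

/-- A `2 × 2` matrix is simply extendable if it is the top-left block of a `3 × 3` matrix
of determinant `1` whose `(3,3)` entry is `0`. -/
def SimplyExtendable {R : Type*} [CommRing R] (A : Matrix (Fin 2) (Fin 2) R) : Prop :=
  ∃ B : Matrix (Fin 3) (Fin 3) R, B.det = 1 ∧
    (∀ i j : Fin 2, B i.castSucc j.castSucc = A i j) ∧ B 2 2 = 0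

/-- A `2 × 2` matrix is non-full if it is the product of a `2 × 1` and a `1 × 2` matrix. -/
def NonFull {R : Type*} [CommRing R] (A : Matrix (Fin 2) (Fin 2) R) : Prop :=
  ∃ l m o q : R, A = !![l * o, l * q; m * o, m * q]
open Matrix

section Aux

variable {R : Type*} [CommRing R]

lemma span_four_coeffs {a b c d : R} (h : Ideal.span {a,b,c,d} = ⊤) :
    ∃ α β γ δ : R, α*a + β*b + γ*c + δ*d = 1 := by
  have h1 : (1:R) ∈ Ideal.span ({a,b,c,d} : Set R) := h ▸ Submodule.mem_top
  rcases Submodule.mem_span_insert.mp h1 with ⟨α, z1, hz1, e1⟩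
  rcases Submodule.mem_span_insert.mp hz1 with ⟨β, z2, hz2, e2⟩
  rcases Submodule.mem_span_insert.mp hz2 with ⟨γ, z3, hz3, e3⟩
  rcases Submodule.mem_span_singleton.mp hz3 with ⟨δ, e4⟩
  exact ⟨α, β, γ, δ, by rw [e1, e2, e3, ← e4]; simp [smul_eq_mul]; ring⟩

lemma nonfull_extendable {A : Matrix (Fin 2) (Fin 2) R}
    (hu : Unimodular2 A) (hA : NonFull A) : Extendable A := by
  obtain ⟨l, m, o, q, rfl⟩ := hA
  have hu' : Ideal.span ({l*o, l*q, m*o, m*q} : Set R) = ⊤ := by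
    simpa [Unimodular2] using hu
  obtain ⟨α, β, γ, δ, h1⟩ := span_four_coeffs hu'
  refine ⟨!![l*o, l*q, γ*o+δ*q; m*o, m*q, -(α*o+β*q); -(β*l+δ*m), α*l+γ*m, 0], ?_, ?_⟩
  · rw [Matrix.det_fin_three]
    simp
    linear_combination (α*(l*o) + β*(l*q) + γ*(m*o) + δ*(m*q) + 1) * h1
  · intro i j; fin_cases i <;> fin_cases j <;> rfl

lemma extendable_ker {A : Matrix (Fin 2) (Fin 2) R} (hd : A.det = 0) (hE : Extendable A) :
    Nonempty (↥(LinearMap.ker A.mulVecLin) ≃ₗ[R] R) := by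
  obtain ⟨B, hB, hblk⟩ := hE
  have ha : B 0 0 = A 0 0 := by simpa using hblk 0 0
  have hb : B 0 1 = A 0 1 := by simpa using hblk 0 1
  have hc : B 1 0 = A 1 0 := by simpa using hblk 1 0
  have hd' : B 1 1 = A 1 1 := by simpa using hblk 1 1
  rw [Matrix.det_fin_three, ha, hb, hc, hd'] at hB
  rw [Matrix.det_fin_two] at hd
  -- the linear functional
  let ψ : ↥(LinearMap.ker A.mulVecLin) →ₗ[R] R :=
    { toFun := fun v => B 2 0 * v.1 0 + B 2 1 * v.1 1
      map_add' := by intro u v; simp; ring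
      map_smul' := by intro r v; simp [smul_eq_mul]; ring }
  have hmulvec : ∀ u : Fin 2 → R, A.mulVecLin u = 0 →
      (A 0 0 * u 0 + A 0 1 * u 1 = 0 ∧ A 1 0 * u 0 + A 1 1 * u 1 = 0) := by
    intro u h
    constructor
    · simpa [Matrix.mulVecLin_apply, Matrix.mulVec, dotProduct,
        Fin.sum_univ_two] using congrFun h 0
    · simpa [Matrix.mulVecLin_apply, Matrix.mulVec, dotProduct,
        Fin.sum_univ_two] using congrFun h 1
  have hinj : Function.Injective ψ := by
    refine LinearMap.ker_eq_bot.mp (LinearMap.ker_eq_bot'.mpr ?_)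
    intro v hv
    obtain ⟨h0, h1⟩ := hmulvec v.1 v.2
    have hv' : B 2 0 * v.1 0 + B 2 1 * v.1 1 = 0 := hv
    -- B.mulVec ![v0,v1,0] = 0
    have hB3 : B.mulVec ![v.1 0, v.1 1, 0] = 0 := by
      funext i
      fin_cases i <;>
        simp [Matrix.mulVec, dotProduct, Fin.sum_univ_three]
      · linear_combination h0 + v.1 0 * ha + v.1 1 * hb
      · linear_combination h1 + v.1 0 * hc + v.1 1 * hd'
      · linear_combination hv'
    have hunit : IsUnit B.det := by
      rw [Matrix.det_fin_three, ha, hb, hc, hd', hB]; exact isUnit_one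
    have h3 : (![v.1 0, v.1 1, 0] : Fin 3 → R) = 0 := by
      have h4 := congrArg (fun u => B⁻¹.mulVec u) hB3
      simp only [Matrix.mulVec_mulVec, Matrix.nonsing_inv_mul B hunit,
        Matrix.one_mulVec, Matrix.mulVec_zero] at h4
      exact h4
    ext i
    fin_cases i
    · simpa using congrFun h3 0
    · simpa using congrFun h3 1
  have hsurj : Function.Surjective ψ := by
    have hker : A.mulVecLin ![A 0 1 * B 1 2 - A 1 1 * B 0 2,
        A 1 0 * B 0 2 - A 0 0 * B 1 2] = 0 := by
      funext i
      fin_cases i <;>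
        simp [Matrix.mulVecLin_apply, Matrix.mulVec, dotProduct, Fin.sum_univ_two]
      · linear_combination (-(B 0 2)) * hd
      · linear_combination (-(B 1 2)) * hd
    set g : ↥(LinearMap.ker A.mulVecLin) := ⟨_, LinearMap.mem_ker.mpr hker⟩ with hg
    have hψg : ψ g = 1 := by
      show B 2 0 * (A 0 1 * B 1 2 - A 1 1 * B 0 2) +
        B 2 1 * (A 1 0 * B 0 2 - A 0 0 * B 1 2) = 1
      linear_combination hB - B 2 2 * hd
    intro r
    exact ⟨r • g, by rw [_root_.map_smul, hψg, smul_eq_mul, mul_one]⟩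
  exact ⟨LinearEquiv.ofBijective ψ ⟨hinj, hsurj⟩⟩

lemma ker_nonfull {A : Matrix (Fin 2) (Fin 2) R} (hd : A.det = 0)
    (e : ↥(LinearMap.ker A.mulVecLin) ≃ₗ[R] R) : NonFull A := by
  rw [Matrix.det_fin_two] at hd
  have hgen : ∀ v : ↥(LinearMap.ker A.mulVecLin), (v : Fin 2 → R) =
      (e v) • ((e.symm 1 : ↥(LinearMap.ker A.mulVecLin)) : Fin 2 → R) := by
    intro v
    have h : (e v) • (e.symm 1) = v := by
      rw [← _root_.map_smul, smul_eq_mul, mul_one, e.symm_apply_apply]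
    calc (v : Fin 2 → R) = ((e v • e.symm 1 : ↥(LinearMap.ker A.mulVecLin)) : Fin 2 → R) :=
          (congrArg Subtype.val h).symm
      _ = (e v) • ((e.symm 1 : ↥(LinearMap.ker A.mulVecLin)) : Fin 2 → R) := by simp
  have hk1 : A.mulVecLin ![A 1 1, -(A 1 0)] = 0 := by
    funext i
    fin_cases i <;>
      simp [Matrix.mulVecLin_apply, Matrix.mulVec, dotProduct, Fin.sum_univ_two]
    all_goals first
      | linear_combination hd | linear_combination -hd | ring
  have hk2 : A.mulVecLin ![-(A 0 1), A 0 0] = 0 := by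
    funext i
    fin_cases i <;>
      simp [Matrix.mulVecLin_apply, Matrix.mulVec, dotProduct, Fin.sum_univ_two]
    all_goals first
      | linear_combination hd | linear_combination -hd | ring
  set k1 : ↥(LinearMap.ker A.mulVecLin) := ⟨_, LinearMap.mem_ker.mpr hk1⟩ with hk1'
  set k2 : ↥(LinearMap.ker A.mulVecLin) := ⟨_, LinearMap.mem_ker.mpr hk2⟩ with hk2'
  set u : R := ((e.symm 1 : ↥(LinearMap.ker A.mulVecLin)) : Fin 2 → R) 0 with hu
  set w : R := ((e.symm 1 : ↥(LinearMap.ker A.mulVecLin)) : Fin 2 → R) 1 with hw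
  have e10 : A 1 1 = (e k1) * u := by
    have := congrFun (hgen k1) 0; exact this
  have e11 : -(A 1 0) = (e k1) * w := by
    have := congrFun (hgen k1) 1; exact this
  have e20 : -(A 0 1) = (e k2) * u := by
    have := congrFun (hgen k2) 0; exact this
  have e21 : A 0 0 = (e k2) * w := by
    have := congrFun (hgen k2) 1; exact this
  refine ⟨e k2, -(e k1), w, -u, ?_⟩
  ext i j
  fin_cases i <;> fin_cases j <;> simp
  · linear_combination e21
  · linear_combination -e20
  · linear_combination -e11
  · linear_combination e10

end Aux

theorem stmt0 (R : Type*) [CommRing R] :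
    [(∀ A : Matrix (Fin 2) (Fin 2) R, Unimodular2 A → A.det = 0 → Extendable A),
     (∀ A : Matrix (Fin 2) (Fin 2) R, Unimodular2 A → A.det = 0 → NonFull A),
     (∀ A : Matrix (Fin 2) (Fin 2) R, Unimodular2 A → A.det = 0 →
        Nonempty (↥(LinearMap.ker A.mulVecLin) ≃ₗ[R] R))].TFAE := by
  tfae_have 1 → 3 := fun h A hu hd => extendable_ker hd (h A hu hd)
  tfae_have 3 → 2 := fun h A hu hd => (h A hu hd).elim fun e => ker_nonfull hd e
  tfae_have 2 → 1 := fun h A hu hd => nonfull_extendable hu (h A hu hd)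
  tfae_finish
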